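/- arXiv:1806.08553 — 2 statements merged into one kernel-verified Lean document; each statement's English description precedes it below -/
import Mathlib

section
/- Let A be an N×N real matrix (N ≥ 1) and define S₂(A) = ½((Tr A)² − Tr(A²)). If A = B·C where B and C are symmetric N×N real matrices and B is positive semidefinite, then S₂(A) ≤ ((N−1)/(2N))·(Tr A)². -/
open Matrix

/-- `S₂(A) = ½((Tr A)² − Tr(A²))`, the second elementary symmetric function of the
eigenvalues of `A`. -/
noncomputable def S2 {N : ℕ} (A : Matrix (Fin N) (Fin N) ℝ) : ℝ :=
  ((trace A) ^ 2 - trace (A * A)) / 2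

/-- Generalized Newton inequality: if `A = B·C` with `B`, `C` symmetric and `B` positive
semidefinite, then `S₂(A) ≤ ((N−1)/(2N))·(Tr A)²`. -/
theorem stmt_0 {N : ℕ} (hN : 1 ≤ N) (A B C : Matrix (Fin N) (Fin N) ℝ)
    (hB : B.IsSymm) (hC : C.IsSymm) (hBpsd : B.PosSemidef) (hA : A = B * C) :
    S2 A ≤ ((N - 1 : ℝ) / (2 * N)) * (trace A) ^ 2 := by
  open scoped MatrixOrder in
  set R := CFC.sqrt B with hRdef
  open scoped MatrixOrder in
  have hRR : R * R = B := CFC.sqrt_mul_sqrt_self B hBpsd.nonneg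
  have hRsym : Rᵀ = R := by
    open scoped MatrixOrder in
    have := (CFC.sqrt_nonneg B).posSemidef.isHermitian
    rwa [Matrix.IsHermitian, conjTranspose_eq_transpose_of_trivial] at this
  set M := R * C * R with hMdef
  have hMsym : Mᵀ = M := by
    rw [hMdef, transpose_mul, transpose_mul, hRsym, hC, mul_assoc]
  have htr : trace A = trace M := by
    rw [hA, ← hRR, mul_assoc, trace_mul_comm R (R * C), hMdef, mul_assoc]
  have htr2 : trace (A * A) = trace (M * M) := by
    rw [hA, ← hRR]
    have : R * R * C * (R * R * C) = R * (R * C * R * (R * C)) := by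
      simp only [mul_assoc]
    rw [this, trace_mul_comm R (R * C * R * (R * C)), hMdef]
    simp only [mul_assoc]
  -- trace (M*M) = ∑ i j, (M i j)^2
  have hMM : trace (M * M) = ∑ i, ∑ j, (M i j) ^ 2 := by
    rw [Matrix.trace, Finset.sum_congr rfl]
    intro i _
    rw [Matrix.diag, Matrix.mul_apply]
    refine Finset.sum_congr rfl fun j _ => ?_
    have : M j i = M i j := by
      calc M j i = Mᵀ i j := rfl
      _ = M i j := by rw [hMsym]
    rw [this, sq]
  have hdiag : ∑ i, (M i i) ^ 2 ≤ ∑ i, ∑ j, (M i j) ^ 2 := by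
    refine Finset.sum_le_sum fun i _ => ?_
    exact Finset.single_le_sum (f := fun j => M i j ^ 2) (fun j _ => sq_nonneg _) (Finset.mem_univ i)
  have hcs : (trace M) ^ 2 ≤ (N : ℝ) * ∑ i, (M i i) ^ 2 := by
    have := sq_sum_le_card_mul_sum_sq (s := Finset.univ)
      (f := fun i : Fin N => M i i)
    simpa [Matrix.trace, Matrix.diag] using this
  have key : (trace A) ^ 2 ≤ (N : ℝ) * trace (A * A) := by
    rw [htr, htr2, hMM]
    calc (trace M) ^ 2 ≤ (N : ℝ) * ∑ i, (M i i) ^ 2 := hcs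
    _ ≤ (N : ℝ) * ∑ i, ∑ j, (M i j) ^ 2 := by
        apply mul_le_mul_of_nonneg_left hdiag (by positivity)
  have hNpos : (0 : ℝ) < N := by exact_mod_cast hN
  rw [S2, div_le_iff₀ (by positivity : (0:ℝ) < 2), div_mul_eq_mul_div, div_mul_eq_mul_div,
    le_div_iff₀ (by positivity : (0:ℝ) < 2 * N)]
  nlinarith [key]
end

section
/- Let A = B·C with B, C symmetric N×N real matrices, B positive semidefinite, and suppose Tr A ≠ 0 and S₂(A) = ((N−1)/(2N))·(Tr A)². Then A = (Tr A / N)·Id and B is positive definite. -/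
open Matrix

private lemma aux_symm_trace_sq_zero {N : ℕ} (P : Matrix (Fin N) (Fin N) ℝ)
    (hP : P.IsSymm) (h : trace (P * P) = 0) : P = 0 := by
  have hsum : ∑ i, ∑ j, (P i j)^2 = 0 := by
    rw [← h]
    simp [Matrix.trace, Matrix.mul_apply, Matrix.diag, sq]
    congr 1; ext i; congr 1; ext j
    rw [show P j i = P i j from by rw [← hP.apply]]
  ext i j
  have := Finset.sum_eq_zero_iff_of_nonneg
    (fun i _ => Finset.sum_nonneg fun j _ => sq_nonneg (P i j)) |>.mp hsum i (Finset.mem_univ i)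
  have := Finset.sum_eq_zero_iff_of_nonneg (fun j _ => sq_nonneg (P i j)) |>.mp this j
    (Finset.mem_univ j)
  simpa [pow_eq_zero_iff] using this

/-- Equality case of the generalized Newton inequality: if `A = B·C` with `B`, `C`
symmetric, `B` positive semidefinite, `Tr A ≠ 0` and `S₂(A) = ((N−1)/(2N))·(Tr A)²`,
then `A = (Tr A / N)·Id` and `B` is positive definite. -/
theorem stmt_1 {N : ℕ} (hN : 1 ≤ N) (A B C : Matrix (Fin N) (Fin N) ℝ)
    (hB : B.IsSymm) (hC : C.IsSymm) (hBpsd : B.PosSemidef) (hA : A = B * C)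
    (htr : trace A ≠ 0)
    (heq : S2 A = ((N - 1 : ℝ) / (2 * N)) * (trace A) ^ 2) :
    A = (trace A / N) • (1 : Matrix (Fin N) (Fin N) ℝ) ∧ B.PosDef := by
  have hNR : (N : ℝ) ≠ 0 := Nat.cast_ne_zero.mpr (by omega)
  obtain ⟨S, hSsymm, hSS⟩ : ∃ S : Matrix (Fin N) (Fin N) ℝ, Sᵀ = S ∧ S * S = B := by
    open scoped MatrixOrder in
    exact ⟨CFC.sqrt B, by
      have := (CFC.sqrt_nonneg B).posSemidef.isHermitian
      rw [Matrix.IsHermitian, conjTranspose_eq_transpose_of_trivial] at this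
      exact this, CFC.sqrt_mul_sqrt_self B hBpsd.nonneg⟩
  set T : ℝ := trace A with hT
  set t : ℝ := T / N with ht
  obtain ⟨M, hM⟩ : ∃ M, M = S * C * S := ⟨_, rfl⟩
  -- trace identities
  have htrM : trace M = T := by
    rw [hM, trace_mul_comm, hT, hA, ← hSS, Matrix.mul_assoc]
  have htrMM : trace (M * M) = trace (A * A) := by
    have e1 : M * M = ((S * C * S) * (S * C)) * S := by
      simp only [hM, Matrix.mul_assoc]
    have e2 : A * A = S * ((S * C * S) * (S * C)) := by
      simp only [hA, ← hSS, Matrix.mul_assoc]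
    rw [e1, trace_mul_comm, ← e2]
  -- from the hypothesis: trace (A*A) = T^2 / N
  have htrAA : trace (A * A) = T ^ 2 / N := by
    have h2 : (T ^ 2 - trace (A * A)) / 2 = ((N - 1 : ℝ) / (2 * N)) * T ^ 2 := heq
    field_simp at h2 ⊢
    linarith
  -- P := M - t • 1 has trace (P*P) = 0
  obtain ⟨P, hP⟩ : ∃ P, P = M - t • (1 : Matrix (Fin N) (Fin N) ℝ) := ⟨_, rfl⟩
  have hPsymm : P.IsSymm := by
    rw [Matrix.IsSymm, hP, Matrix.transpose_sub, Matrix.transpose_smul, Matrix.transpose_one, hM,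
      Matrix.transpose_mul, Matrix.transpose_mul, hSsymm, hC.eq, Matrix.mul_assoc]
  have hPP : P * P = M * M - (2 * t) • M + (t ^ 2) • 1 := by
    rw [hP]
    simp only [Matrix.sub_mul, Matrix.mul_sub, Matrix.smul_mul, Matrix.mul_smul, smul_sub,
      smul_smul, Matrix.one_mul, Matrix.mul_one]
    rw [pow_two, two_mul, add_smul]
    abel
  have htrPP : trace (P * P) = 0 := by
    rw [hPP]
    rw [trace_add, trace_sub, trace_smul, trace_smul, trace_one, htrM, htrMM, htrAA]
    simp only [smul_eq_mul, Finset.card_univ, Fintype.card_fin]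
    rw [ht]
    field_simp
    ring
  have hPzero : P = 0 := aux_symm_trace_sq_zero P hPsymm htrPP
  have hMt : M = t • 1 := by
    rw [← sub_eq_zero, ← hP]; exact hPzero
  -- t ≠ 0
  have htne : t ≠ 0 := div_ne_zero htr hNR
  -- det S ≠ 0
  have hdetS : det S ≠ 0 := by
    intro h0
    have hdM : det M = t ^ N := by
      rw [hMt, Matrix.det_smul, Matrix.det_one, Fintype.card_fin, mul_one]
    rw [hM, Matrix.det_mul, Matrix.det_mul, h0] at hdM
    simp at hdM
    exact pow_ne_zero N htne hdM.symm
  have hSinv : S⁻¹ * S = 1 := Matrix.nonsing_inv_mul S hdetS.isUnit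
  have hSinv' : S * S⁻¹ = 1 := Matrix.mul_nonsing_inv S hdetS.isUnit
  -- A = t • 1
  have hAS : A * S = t • S := by
    rw [hA, ← hSS, Matrix.mul_assoc, Matrix.mul_assoc, ← Matrix.mul_assoc S C S,
      ← hM, hMt, Matrix.mul_smul, Matrix.mul_one]
  have hAt : A = t • 1 := by
    calc A = A * S * S⁻¹ := by rw [Matrix.mul_assoc, hSinv', Matrix.mul_one]
    _ = t • (S * S⁻¹) := by rw [hAS, Matrix.smul_mul]
    _ = t • 1 := by rw [hSinv']
  refine ⟨hAt, ?_⟩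
  -- B is positive definite
  refine Matrix.posDef_iff_dotProduct_mulVec.mpr ⟨hBpsd.isHermitian, fun x hx => ?_⟩
  have hSx : S *ᵥ x ≠ 0 := by
    intro h0
    apply hx
    have hxx : S⁻¹ *ᵥ (S *ᵥ x) = x := by
      rw [Matrix.mulVec_mulVec, hSinv, Matrix.one_mulVec]
    rw [h0, Matrix.mulVec_zero] at hxx
    exact hxx.symm
  have key : dotProduct (star x) (B *ᵥ x) = dotProduct (S *ᵥ x) (S *ᵥ x) := by
    rw [← hSS, ← Matrix.mulVec_mulVec, dotProduct_mulVec]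
    congr 1
    show x ᵥ* S = S *ᵥ x
    rw [← hSsymm, Matrix.vecMul_transpose, hSsymm]
  rw [key]
  obtain ⟨i, hi⟩ := Function.ne_iff.mp hSx
  have hdp : dotProduct (S *ᵥ x) (S *ᵥ x) = ∑ j, (S *ᵥ x) j ^ 2 := by
    simp [dotProduct, sq]
  rw [hdp]
  exact Finset.sum_pos' (fun j _ => sq_nonneg _) ⟨i, Finset.mem_univ i, lt_of_le_of_ne (sq_nonneg _) (Ne.symm (pow_ne_zero 2 hi))⟩
end
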